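/- For every natural number n, the following identity among Bernoulli numbers holds: Σ_{k=0}^{n+1} C(n+1, k) · (n+k+1) · B_{n+k} = 0, where C(a, b) denotes the binomial coefficient (the Seidel–Kaneko identity). -/

import Mathlib

section Aux
open Polynomial Finset

noncomputable def LB (p : Polynomial ℚ) : ℚ := p.sum fun n a => a * _root_.bernoulli n

lemma LB_zero : LB 0 = 0 := by simp [LB]

lemma LB_add (p q : Polynomial ℚ) : LB (p + q) = LB p + LB q := by
  unfold LB
  exact Polynomial.sum_add_index p q _ (by simp) (by intros; ring)

lemma LB_sum {ι : Type*} (s : Finset ι) (f : ι → Polynomial ℚ) :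
    LB (∑ i ∈ s, f i) = ∑ i ∈ s, LB (f i) := by
  classical
  induction s using Finset.induction_on with
  | empty => simp [LB_zero]
  | insert _ _ h ih => rw [Finset.sum_insert h, Finset.sum_insert h, LB_add, ih]

lemma LB_monomial (n : ℕ) (a : ℚ) : LB (monomial n a) = a * _root_.bernoulli n := by
  unfold LB
  exact Polynomial.sum_monomial_index a _ (by simp)

lemma LB_smul (a : ℚ) (p : Polynomial ℚ) : LB (a • p) = a * LB p := by
  unfold LB
  rw [Polynomial.sum_smul_index _ _ _ (by simp)]
  rw [Polynomial.sum, Polynomial.sum, Finset.mul_sum]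
  exact Finset.sum_congr rfl fun i _ => by ring

lemma LB_C_mul (a : ℚ) (p : Polynomial ℚ) : LB (C a * p) = a * LB p := by
  rw [← Polynomial.smul_eq_C_mul, LB_smul]

lemma LB_X_pow (k : ℕ) : LB (X ^ k) = _root_.bernoulli k := by
  rw [← Polynomial.monomial_one_right_eq_X_pow, LB_monomial, one_mul]

lemma key_sum (k : ℕ) :
    ∑ j ∈ range (k + 1), (k.choose j : ℚ) * _root_.bernoulli j = (-1) ^ k * _root_.bernoulli k := by
  rw [Finset.sum_range_succ, _root_.sum_bernoulli, Nat.choose_self]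
  match k with
  | 0 => norm_num
  | 1 => norm_num [_root_.bernoulli_one]
  | (m + 2) =>
    rcases Nat.even_or_odd (m + 2) with h | h
    · simp [h.neg_one_pow]
    · have hz : _root_.bernoulli (m + 2) = 0 := by
        rw [bernoulli_eq_bernoulli'_of_ne_one (by omega)]
        exact bernoulli'_eq_zero_of_odd h (by omega)
      simp [hz]

lemma LB_reflect_pow (k : ℕ) : LB ((-1 - X) ^ k) = _root_.bernoulli k := by
  have h1 : (-1 - X : Polynomial ℚ) = -(X + 1) := by ring
  have h2 : ((-1 - X : Polynomial ℚ)) ^ k = (-1) ^ k * (X + 1) ^ k := by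
    rw [h1, neg_pow]
  have h3 : ((X + 1 : Polynomial ℚ)) ^ k = ∑ j ∈ range (k + 1), C (k.choose j : ℚ) * X ^ j := by
    rw [add_pow]
    refine Finset.sum_congr rfl fun j hj => ?_
    rw [one_pow, mul_one, mul_comm, Polynomial.C_eq_natCast]
  have h4 : ((-1 : Polynomial ℚ)) ^ k = C ((-1 : ℚ) ^ k) := by
    simp
  rw [h2, h4, h3, Finset.mul_sum, LB_sum]
  have : ∀ j ∈ range (k + 1),
      LB (C ((-1 : ℚ) ^ k) * (C (k.choose j : ℚ) * X ^ j))
        = (-1 : ℚ) ^ k * ((k.choose j : ℚ) * _root_.bernoulli j) := by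
    intro j _
    rw [LB_C_mul, LB_C_mul, LB_X_pow]
  rw [Finset.sum_congr rfl this, ← Finset.mul_sum, key_sum]
  rw [← mul_assoc, ← mul_pow]
  norm_num

lemma LB_comp_reflect (p : Polynomial ℚ) : LB (p.comp (-1 - X)) = LB p := by
  induction p using Polynomial.induction_on' with
  | add p q hp hq => rw [add_comp, LB_add, LB_add, hp, hq]
  | monomial n a =>
    rw [← Polynomial.C_mul_X_pow_eq_monomial, mul_comp, C_comp, X_pow_comp,
      LB_C_mul, LB_reflect_pow, LB_C_mul, LB_X_pow]

lemma LB_shift_pow (m n : ℕ) :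
    LB ((X + 1) ^ m * X ^ n) = ∑ k ∈ range (m + 1), (m.choose k : ℚ) * _root_.bernoulli (n + k) := by
  have h3 : ((X + 1 : Polynomial ℚ)) ^ m * X ^ n
      = ∑ k ∈ range (m + 1), C (m.choose k : ℚ) * X ^ (n + k) := by
    rw [add_pow, Finset.sum_mul]
    refine Finset.sum_congr rfl fun k hk => ?_
    rw [one_pow, mul_one, Polynomial.C_eq_natCast, pow_add]
    ring
  rw [h3, LB_sum]
  exact Finset.sum_congr rfl fun k _ => by rw [LB_C_mul, LB_X_pow]

lemma antisym (n : ℕ) :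
    LB ((X + 1) ^ (n + 1) * X ^ n) + LB ((X + 1) ^ n * X ^ (n + 1)) = 0 := by
  set q : Polynomial ℚ := (X + 1) ^ (n + 1) * X ^ n + (X + 1) ^ n * X ^ (n + 1) with hq
  have hcomp : q.comp (-1 - X) = -q := by
    have hX1 : ((X + 1 : Polynomial ℚ)).comp (-1 - X) = -X := by
      simp [add_comp]; ring
    have hX : (X : Polynomial ℚ).comp (-1 - X) = -(X + 1) := by simp; ring
    rw [hq]
    simp only [add_comp, mul_comp, pow_comp, hX1, hX]
    have hsign : ((-1 : Polynomial ℚ)) ^ n * (-1) ^ (n + 1) = -1 := by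
      rw [← pow_add]
      exact Odd.neg_one_pow ⟨n, by ring⟩
    simp only [neg_pow (X : Polynomial ℚ), neg_pow ((X : Polynomial ℚ) + 1)]
    linear_combination (X ^ (n + 1) * (X + 1) ^ n + X ^ n * (X + 1) ^ (n + 1)) * hsign
  have h := LB_comp_reflect q
  rw [hcomp] at h
  have hneg : LB (-q) = -LB q := by
    have := LB_smul (-1) q
    simpa using this
  rw [hneg] at h
  have : LB q = 0 := by linarith
  rw [hq, LB_add] at this
  exact this

end Aux

theorem seidel_kaneko_identity (n : ℕ) :
    ∑ k ∈ Finset.range (n + 2), ((n + 1).choose k : ℚ) * (n + k + 1 : ℚ) * bernoulli (n + k) = 0 := by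
  have key : (∑ k ∈ Finset.range (n + 2), ((n + 1).choose k : ℚ) * bernoulli (n + k))
      + ∑ j ∈ Finset.range (n + 1), (n.choose j : ℚ) * bernoulli (n + 1 + j) = 0 := by
    have hS1 := LB_shift_pow (n + 1) n
    have hS2 := LB_shift_pow n (n + 1)
    have hA := antisym n
    rw [hS1, hS2] at hA
    exact hA
  have split : ∑ k ∈ Finset.range (n + 2), ((n + 1).choose k : ℚ) * (n + k + 1 : ℚ) * bernoulli (n + k)
      = ((n : ℚ) + 1) * ∑ k ∈ Finset.range (n + 2), ((n + 1).choose k : ℚ) * bernoulli (n + k)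
        + ∑ k ∈ Finset.range (n + 2), (k : ℚ) * ((n + 1).choose k : ℚ) * bernoulli (n + k) := by
    rw [Finset.mul_sum, ← Finset.sum_add_distrib]
    exact Finset.sum_congr rfl fun k _ => by push_cast; ring
  have reidx : ∑ k ∈ Finset.range (n + 2), (k : ℚ) * ((n + 1).choose k : ℚ) * bernoulli (n + k)
      = ((n : ℚ) + 1) * ∑ j ∈ Finset.range (n + 1), (n.choose j : ℚ) * bernoulli (n + 1 + j) := by
    rw [Finset.sum_range_succ']
    simp only [Nat.cast_zero, zero_mul, add_zero]
    rw [Finset.mul_sum]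
    refine Finset.sum_congr rfl fun j _ => ?_
    have hcc : (n + 1) * n.choose j = (n + 1).choose (j + 1) * (j + 1) :=
      Nat.add_one_mul_choose_eq n j
    have hcc' : ((n : ℚ) + 1) * (n.choose j : ℚ)
        = ((n + 1).choose (j + 1) : ℚ) * ((j : ℚ) + 1) := by exact_mod_cast hcc
    rw [show n + (j + 1) = n + 1 + j from by omega]
    push_cast
    linear_combination (-bernoulli (n + 1 + j)) * hcc'
  rw [split, reidx, ← mul_add, key, mul_zero]
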